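/- arXiv:2206.06988 — 7 statements merged into one kernel-verified Lean document; each statement's English description precedes it below -/
import Mathlib

section
/- Touching separation theorem: Let f, f' : 2^S → ℕ be modular set functions and g : 2^S → ℕ a supermodular set function on a finite set S, with f(∅) = f'(∅) = g(∅) = 0 and max(f(X), g(X)) ≤ f'(X) for every X ⊆ S. Then there exists a modular set function h : 2^S → ℕ such that max(f(X), g(X)) ≤ h(X) ≤ f'(X) for every X ⊆ S, and h(S) = max_{T ⊆ S} ( f(T) + g(S \ T) ). -/
open Finset

section aux

set_option linter.unusedSectionVars false

variable {S : Type*} [Fintype S] [DecidableEq S]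

private lemma mod_add (f : Finset S → ℕ)
    (hf : ∀ X Y : Finset S, f X + f Y = f (X ∪ Y) + f (X ∩ Y))
    (hf0 : f ∅ = 0) : ∀ X : Finset S, f X = ∑ x ∈ X, f {x} := by
  intro X
  induction X using Finset.induction_on with
  | empty => simpa using hf0
  | @insert a s ha ih =>
      have h := hf {a} s
      have h1 : ({a} : Finset S) ∩ s = ∅ := by
        simp [Finset.singleton_inter_of_notMem ha]
      have h2 : ({a} : Finset S) ∪ s = insert a s := by
        rw [Finset.insert_eq]
      rw [h1, h2, hf0] at h
      rw [Finset.sum_insert ha, ← ih]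
      omega

private lemma mod_mono (f : Finset S → ℕ)
    (hf : ∀ X Y : Finset S, f X + f Y = f (X ∪ Y) + f (X ∩ Y))
    (hf0 : f ∅ = 0) : ∀ X Y : Finset S, X ⊆ Y → f X ≤ f Y := by
  intro X Y hXY
  have h := hf X (Y \ X)
  rw [Finset.union_sdiff_of_subset hXY, Finset.inter_sdiff_self, hf0] at h
  omega

/-- stuck point implies total equals p univ -/
private lemma stuck_lemma (p : Finset S → ℕ) (w : S → ℕ)
    (hp0 : p ∅ = 0)
    (hmono : ∀ X Y : Finset S, X ⊆ Y → p X ≤ p Y)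
    (hsuper : ∀ X Y : Finset S, p X + p Y ≤ p (X ∪ Y) + p (X ∩ Y))
    (hfeas : ∀ X : Finset S, p X ≤ ∑ x ∈ X, w x)
    (hstuck : ∀ x, w x ≠ 0 → ∃ X : Finset S, x ∈ X ∧ ∑ y ∈ X, w y = p X) :
    ∑ x, w x = p Finset.univ := by
  classical
  set T := (Finset.univ.powerset.filter fun X : Finset S => ∑ y ∈ X, w y = p X).sup id with hT
  have hTtight : ∑ y ∈ T, w y = p T := by
    rw [hT]
    refine Finset.sup_induction (p := fun A : Finset S => ∑ y ∈ A, w y = p A) ?_ ?_ ?_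
    · simpa using hp0.symm
    · intro A hA B hB
      have hA' : ∑ y ∈ A, w y = p A := hA
      have hB' : ∑ y ∈ B, w y = p B := hB
      have hs := hsuper A B
      have e1 : ∑ y ∈ A ∪ B, w y + ∑ y ∈ A ∩ B, w y = ∑ y ∈ A, w y + ∑ y ∈ B, w y :=
        Finset.sum_union_inter
      have e3 := hfeas (A ∪ B)
      have e4 := hfeas (A ∩ B)
      have e5 := hmono A (A ∪ B) Finset.subset_union_left
      have e6 := hmono (A ∩ B) A Finset.inter_subset_left
      show ∑ y ∈ A ⊔ B, w y = p (A ⊔ B)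
      rw [Finset.sup_eq_union]
      omega
    · intro X hX
      simpa using (Finset.mem_filter.mp hX).2
  have hzero : ∀ x ∉ T, w x = 0 := by
    intro x hx
    by_contra hwx
    obtain ⟨X, hxX, hXt⟩ := hstuck x hwx
    have hXmem : X ∈ Finset.univ.powerset.filter fun X : Finset S => ∑ y ∈ X, w y = p X := by
      simp [hXt]
    have hsub : X ⊆ T := by
      have := Finset.le_sup (f := id) hXmem
      simpa [hT] using this
    exact hx (hsub hxX)
  have hsplit : ∑ x ∈ Finset.univ \ T, w x + ∑ x ∈ T, w x = ∑ x, w x :=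
    Finset.sum_sdiff (Finset.subset_univ T)
  have hout : ∑ x ∈ Finset.univ \ T, w x = 0 := by
    apply Finset.sum_eq_zero
    intro x hx
    exact hzero x (Finset.mem_sdiff.mp hx).2
  have h1 := hmono T Finset.univ (Finset.subset_univ T)
  have h2 := hfeas Finset.univ
  omega

/-- key lemma: minimize down to p univ -/
private lemma key_lemma (p : Finset S → ℕ) (b : S → ℕ)
    (hp0 : p ∅ = 0)
    (hmono : ∀ X Y : Finset S, X ⊆ Y → p X ≤ p Y)
    (hb : ∀ X : Finset S, p X ≤ ∑ x ∈ X, b x)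
    (hsuper : ∀ X Y : Finset S, p X + p Y ≤ p (X ∪ Y) + p (X ∩ Y)) :
    ∃ w : S → ℕ, (∀ X : Finset S, p X ≤ ∑ x ∈ X, w x) ∧ (∀ x, w x ≤ b x) ∧
      ∑ x, w x = p Finset.univ := by
  classical
  suffices H : ∀ n (w : S → ℕ), (∀ X : Finset S, p X ≤ ∑ x ∈ X, w x) → (∀ x, w x ≤ b x) →
      ∑ x, w x ≤ n →
      ∃ w' : S → ℕ, (∀ X : Finset S, p X ≤ ∑ x ∈ X, w' x) ∧ (∀ x, w' x ≤ b x) ∧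
        ∑ x, w' x = p Finset.univ by
    exact H (∑ x, b x) b hb (fun _ => le_rfl) le_rfl
  intro n
  induction n with
  | zero =>
      intro w hfeas hwb hsum
      refine ⟨w, hfeas, hwb, ?_⟩
      apply stuck_lemma p w hp0 hmono hsuper hfeas
      intro x hwx
      exfalso
      have : w x ≤ ∑ y, w y := Finset.single_le_sum (fun i _ => Nat.zero_le _) (Finset.mem_univ x)
      omega
  | succ n ih =>
      intro w hfeas hwb hsum
      by_cases hstuck : ∀ x, w x ≠ 0 → ∃ X : Finset S, x ∈ X ∧ ∑ y ∈ X, w y = p X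
      · exact ⟨w, hfeas, hwb, stuck_lemma p w hp0 hmono hsuper hfeas hstuck⟩
      · push_neg at hstuck
        obtain ⟨x0, hx0, hnot⟩ := hstuck
        set w' := Function.update w x0 (w x0 - 1) with hw'
        have hsum' : ∀ X : Finset S, x0 ∈ X → ∑ y ∈ X, w' y + 1 = ∑ y ∈ X, w y := by
          intro X hx0X
          rw [hw', Finset.sum_update_of_mem hx0X]
          have : w x0 + ∑ y ∈ X \ {x0}, w y = ∑ y ∈ X, w y := by
            rw [← Finset.erase_eq]
            exact Finset.add_sum_erase _ _ hx0X
          omega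
        have hsame : ∀ X : Finset S, x0 ∉ X → ∑ y ∈ X, w' y = ∑ y ∈ X, w y := by
          intro X hx0X
          apply Finset.sum_congr rfl
          intro y hy
          rw [hw', Function.update_of_ne (by rintro rfl; exact hx0X hy)]
        have hfeas' : ∀ X : Finset S, p X ≤ ∑ y ∈ X, w' y := by
          intro X
          by_cases hX : x0 ∈ X
          · have h1 := hnot X hX
            have h2 := hfeas X
            have h3 := hsum' X hX
            omega
          · rw [hsame X hX]; exact hfeas X
        have hwb' : ∀ x, w' x ≤ b x := by
          intro x
          by_cases hx : x = x0
          · subst hx; rw [hw', Function.update_self]; exact le_trans (Nat.sub_le _ _) (hwb x)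
          · rw [hw', Function.update_of_ne hx]; exact hwb x
        have hdec : ∑ y, w' y + 1 = ∑ y, w y := hsum' Finset.univ (Finset.mem_univ x0)
        exact ih w' hfeas' hwb' (by omega)

end aux

/-- Touching separation theorem: For modular `f, f'` and supermodular `g`
with `f(∅) = f'(∅) = g(∅) = 0` and `max(f(X), g(X)) ≤ f'(X)` for all `X`, there is a
modular `h` with `max(f(X), g(X)) ≤ h(X) ≤ f'(X)` for all `X` and
`h(S) = max_{T ⊆ S} (f(T) + g(S \ T))`. -/
theorem stmt5 {S : Type*} [Fintype S] [DecidableEq S]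
    (f f' g : Finset S → ℕ)
    (hf : ∀ X Y : Finset S, f X + f Y = f (X ∪ Y) + f (X ∩ Y))
    (hf' : ∀ X Y : Finset S, f' X + f' Y = f' (X ∪ Y) + f' (X ∩ Y))
    (hg : ∀ X Y : Finset S, g X + g Y ≤ g (X ∪ Y) + g (X ∩ Y))
    (hf0 : f ∅ = 0) (hf'0 : f' ∅ = 0) (hg0 : g ∅ = 0)
    (hle : ∀ X : Finset S, max (f X) (g X) ≤ f' X) :
    ∃ h : Finset S → ℕ,
      (∀ X Y : Finset S, h X + h Y = h (X ∪ Y) + h (X ∩ Y)) ∧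
      (∀ X : Finset S, max (f X) (g X) ≤ h X ∧ h X ≤ f' X) ∧
      h Finset.univ = Finset.univ.powerset.sup fun T => f T + g (Finset.univ \ T) := by
  classical
  set p : Finset S → ℕ := fun X => X.powerset.sup fun T => f T + g (X \ T) with hpdef
  have hfmono := mod_mono f hf hf0
  have hf'mono := mod_mono f' hf' hf'0
  have hp0 : p ∅ = 0 := by
    simp [hpdef, hf0, hg0]
  have hpf : ∀ X : Finset S, f X ≤ p X := by
    intro X
    have := Finset.le_sup (f := fun T => f T + g (X \ T)) (Finset.mem_powerset_self X)
    simpa [hg0] using this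
  have hpg : ∀ X : Finset S, g X ≤ p X := by
    intro X
    have := Finset.le_sup (f := fun T => f T + g (X \ T))
      (Finset.empty_mem_powerset X)
    simpa [hf0] using this
  have hpb : ∀ X : Finset S, p X ≤ f' X := by
    intro X
    apply Finset.sup_le
    intro T hT
    rw [Finset.mem_powerset] at hT
    have h1 : f T ≤ f' T := le_trans (le_max_left _ _) (hle T)
    have h2 : g (X \ T) ≤ f' (X \ T) := le_trans (le_max_right _ _) (hle (X \ T))
    have h3 := hf' T (X \ T)
    rw [Finset.union_sdiff_of_subset hT, Finset.inter_sdiff_self, hf'0] at h3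
    omega
  have hpmono : ∀ X Y : Finset S, X ⊆ Y → p X ≤ p Y := by
    intro X Y hXY
    apply Finset.sup_le
    intro T hT
    rw [Finset.mem_powerset] at hT
    set T' := Y \ (X \ T) with hT'
    have hT'mem : T' ∈ Y.powerset := Finset.mem_powerset.mpr (Finset.sdiff_subset)
    have hYT' : Y \ T' = X \ T := by
      rw [hT']
      exact Finset.sdiff_sdiff_eq_self (le_trans (Finset.sdiff_subset) hXY)
    have hTT' : T ⊆ T' := by
      intro x hx
      rw [hT', Finset.mem_sdiff, Finset.mem_sdiff]
      exact ⟨hXY (hT hx), fun h => h.2 hx⟩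
    calc f T + g (X \ T) ≤ f T' + g (Y \ T') := by
          rw [hYT']; exact Nat.add_le_add_right (hfmono _ _ hTT') _
      _ ≤ p Y := Finset.le_sup (f := fun T => f T + g (Y \ T)) hT'mem
  have hpsuper : ∀ X Y : Finset S, p X + p Y ≤ p (X ∪ Y) + p (X ∩ Y) := by
    intro X Y
    obtain ⟨TX, hTXm, hTX⟩ := Finset.exists_mem_eq_sup X.powerset
      ⟨∅, Finset.empty_mem_powerset X⟩ (fun T => f T + g (X \ T))
    obtain ⟨TY, hTYm, hTY⟩ := Finset.exists_mem_eq_sup Y.powerset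
      ⟨∅, Finset.empty_mem_powerset Y⟩ (fun T => f T + g (Y \ T))
    rw [Finset.mem_powerset] at hTXm hTYm
    set A := X \ TX with hA
    set B := Y \ TY with hB
    set T1 := (X ∪ Y) \ (A ∪ B) with hT1
    set T2 := (X ∩ Y) \ (A ∩ B) with hT2
    have hABXY : A ∪ B ⊆ X ∪ Y :=
      Finset.union_subset_union Finset.sdiff_subset Finset.sdiff_subset
    have hABXY2 : A ∩ B ⊆ X ∩ Y :=
      Finset.inter_subset_inter Finset.sdiff_subset Finset.sdiff_subset
    have hT1c : (X ∪ Y) \ T1 = A ∪ B := by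
      rw [hT1]
      exact Finset.sdiff_sdiff_eq_self hABXY
    have hT2c : (X ∩ Y) \ T2 = A ∩ B := by
      rw [hT2]
      exact Finset.sdiff_sdiff_eq_self hABXY2
    -- f part
    have hu : TX ∪ TY ⊆ T1 ∪ T2 := by
      intro x hx
      simp only [hT1, hT2, hA, hB, Finset.mem_union, Finset.mem_sdiff, Finset.mem_inter] at hx ⊢
      have h1 : x ∈ TX → x ∈ X := fun h => hTXm h
      have h2 : x ∈ TY → x ∈ Y := fun h => hTYm h
      tauto
    have hi : TX ∩ TY ⊆ T1 ∩ T2 := by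
      intro x hx
      simp only [hT1, hT2, hA, hB, Finset.mem_union, Finset.mem_sdiff, Finset.mem_inter] at hx ⊢
      have h1 : x ∈ TX → x ∈ X := fun h => hTXm h
      have h2 : x ∈ TY → x ∈ Y := fun h => hTYm h
      tauto
    have hfpart : f TX + f TY ≤ f T1 + f T2 := by
      have e1 := hf TX TY
      have e2 := hf T1 T2
      have e3 := hfmono _ _ hu
      have e4 := hfmono _ _ hi
      omega
    have hgpart : g A + g B ≤ g (A ∪ B) + g (A ∩ B) := hg A B
    have hle1 : f T1 + g ((X ∪ Y) \ T1) ≤ p (X ∪ Y) :=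
      Finset.le_sup (f := fun T => f T + g ((X ∪ Y) \ T))
        (Finset.mem_powerset.mpr Finset.sdiff_subset)
    have hle2 : f T2 + g ((X ∩ Y) \ T2) ≤ p (X ∩ Y) :=
      Finset.le_sup (f := fun T => f T + g ((X ∩ Y) \ T))
        (Finset.mem_powerset.mpr Finset.sdiff_subset)
    rw [hT1c] at hle1
    rw [hT2c] at hle2
    have hpX : p X = f TX + g A := hTX
    have hpY : p Y = f TY + g B := hTY
    omega
  -- apply key lemma with b x = f' {x}
  have hb : ∀ X : Finset S, p X ≤ ∑ x ∈ X, f' {x} := by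
    intro X
    rw [← mod_add f' hf' hf'0]
    exact hpb X
  obtain ⟨w, hwfeas, hwb, hwsum⟩ := key_lemma p (fun x => f' {x}) hp0 hpmono hb hpsuper
  refine ⟨fun X => ∑ x ∈ X, w x, ?_, ?_, ?_⟩
  · intro X Y
    exact Finset.sum_union_inter.symm
  · intro X
    constructor
    · exact le_trans (max_le (hpf X) (hpg X)) (hwfeas X)
    · calc ∑ x ∈ X, w x ≤ ∑ x ∈ X, f' {x} := Finset.sum_le_sum fun x _ => hwb x
        _ = f' X := (mod_add f' hf' hf'0 X).symm
  · exact hwsum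
end

section
/- Let f : 2^S → ℕ be modular and g : 2^S → ℕ be supermodular on a finite set S with f(∅) = g(∅) = 0. Define g'(X) = max_{T ⊆ X} ( g(T) + f(X \ T) ). Then g' is supermodular. -/
/-- For modular `f` and supermodular `g` with `f(∅) = g(∅) = 0`,
the function `g'(X) = max_{T ⊆ X} (g(T) + f(X \ T))` is supermodular. -/
theorem stmt6 {S : Type*} [Fintype S] [DecidableEq S]
    (f g : Finset S → ℕ)
    (hf : ∀ X Y : Finset S, f X + f Y = f (X ∪ Y) + f (X ∩ Y))
    (hg : ∀ X Y : Finset S, g X + g Y ≤ g (X ∪ Y) + g (X ∩ Y))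
    (hf0 : f ∅ = 0) (hg0 : g ∅ = 0)
    (g' : Finset S → ℕ)
    (hg' : ∀ X : Finset S, g' X = X.powerset.sup fun T => g T + f (X \ T)) :
    ∀ X Y : Finset S, g' X + g' Y ≤ g' (X ∪ Y) + g' (X ∩ Y) := by
  intro X Y
  obtain ⟨T, hTmem, hT⟩ := Finset.exists_mem_eq_sup X.powerset
    ⟨∅, Finset.empty_mem_powerset X⟩ (fun T => g T + f (X \ T))
  obtain ⟨U, hUmem, hU⟩ := Finset.exists_mem_eq_sup Y.powerset
    ⟨∅, Finset.empty_mem_powerset Y⟩ (fun U => g U + f (Y \ U))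
  rw [Finset.mem_powerset] at hTmem hUmem
  rw [hg' X, hg' Y, hT, hU]
  have hA : T ∪ U ∈ (X ∪ Y).powerset := by
    rw [Finset.mem_powerset]
    exact Finset.union_subset_union hTmem hUmem
  have hB : T ∩ U ∈ (X ∩ Y).powerset := by
    rw [Finset.mem_powerset]
    exact Finset.inter_subset_inter hTmem hUmem
  have key : g T + f (X \ T) + (g U + f (Y \ U)) ≤
      (g (T ∪ U) + f ((X ∪ Y) \ (T ∪ U))) + (g (T ∩ U) + f ((X ∩ Y) \ (T ∩ U))) := by
    have hgpart := hg T U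
    have hunion : (X \ T) ∪ (Y \ U) = ((X ∪ Y) \ (T ∪ U)) ∪ ((X ∩ Y) \ (T ∩ U)) := by
      ext x
      simp only [Finset.mem_union, Finset.mem_sdiff, Finset.mem_inter]
      have h1 : x ∈ T → x ∈ X := fun h => hTmem h
      have h2 : x ∈ U → x ∈ Y := fun h => hUmem h
      tauto
    have hinter : (X \ T) ∩ (Y \ U) = ((X ∪ Y) \ (T ∪ U)) ∩ ((X ∩ Y) \ (T ∩ U)) := by
      ext x
      simp only [Finset.mem_union, Finset.mem_sdiff, Finset.mem_inter]
      have h1 : x ∈ T → x ∈ X := fun h => hTmem h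
      have h2 : x ∈ U → x ∈ Y := fun h => hUmem h
      tauto
    have hfpart : f (X \ T) + f (Y \ U) =
        f ((X ∪ Y) \ (T ∪ U)) + f ((X ∩ Y) \ (T ∩ U)) := by
      rw [hf (X \ T) (Y \ U), hf ((X ∪ Y) \ (T ∪ U)) ((X ∩ Y) \ (T ∩ U)),
        hunion, hinter]
    omega
  calc g T + f (X \ T) + (g U + f (Y \ U))
      ≤ (g (T ∪ U) + f ((X ∪ Y) \ (T ∪ U))) + (g (T ∩ U) + f ((X ∩ Y) \ (T ∩ U))) := key
    _ ≤ g' (X ∪ Y) + g' (X ∩ Y) := by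
        rw [hg' (X ∪ Y), hg' (X ∩ Y)]
        exact Nat.add_le_add (Finset.le_sup (f := fun T => g T + f ((X ∪ Y) \ T)) hA) (Finset.le_sup (f := fun T => g T + f ((X ∩ Y) \ T)) hB)
end

section
/- MoV Fair Matching on complete bipartite graphs: Let U be a finite set of vertices colored by colors c_1, …, c_{|C|} with |U_{c_1}| ≥ |U_{c_2}| ≥ … (and |U_{c_i}| := 0 for i > |C|), let V have k vertices, and let ℓ ∈ ℕ. There exists a partition of U into k (possibly empty) parts M(v_1), …, M(v_k) each of which is ℓ-fair with respect to MoV (i.e., for each part, the count of the most frequent color minus the count of the second most frequent color is at most ℓ) if and only if |U_{c_1}| ≤ ℓ·k + Σ_{i∈[k]} |U_{c_{i+1}}|. -/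
/-- `S` is `ℓ`-fair w.r.t. MoV: the count of the most frequent color minus the count of
the second most frequent color (a color occurring zero times counts if fewer than two
colors appear) is at most `ℓ`. -/
def MovFair {A : Type*} [DecidableEq A] (col : A → ℕ) (ℓ : ℕ) (S : Finset A) : Prop :=
  ((S.image col).sup fun c => (S.filter fun a => col a = c).card)
    - (((S.image col) ×ˢ (S.image col)).filter fun p : ℕ × ℕ => p.1 ≠ p.2).sup
        (fun p => min ((S.filter fun a => col a = p.1).card)
                      ((S.filter fun a => col a = p.2).card)) ≤ ℓ

namespace MovAux

variable {A : Type*} [DecidableEq A]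
set_option linter.unusedSectionVars false

def cnt' (col : A → ℕ) (S : Finset A) (c : ℕ) : ℕ := (S.filter fun a => col a = c).card

lemma mem_image_iff (col : A → ℕ) (S : Finset A) (c : ℕ) :
    c ∈ S.image col ↔ 0 < cnt' col S c := by
  rw [cnt', Finset.card_pos, Finset.filter_nonempty_iff]
  simp [Finset.mem_image]

lemma fairA (col : A → ℕ) (ℓ : ℕ) (S : Finset A) (h : ∀ c, cnt' col S c ≤ ℓ) :
    MovFair col ℓ S := by
  unfold MovFair
  have h1 : ((S.image col).sup fun c => (S.filter fun a => col a = c).card) ≤ ℓ :=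
    Finset.sup_le fun c _ => h c
  exact le_trans (Nat.sub_le _ _) h1

lemma fairB (col : A → ℕ) (ℓ : ℕ) (S : Finset A) (c₁ c₂ : ℕ) (hne : c₁ ≠ c₂)
    (h1 : 0 < cnt' col S c₁) (h2 : 0 < cnt' col S c₂)
    (hall : ∀ c, cnt' col S c ≤ ℓ + min (cnt' col S c₁) (cnt' col S c₂)) :
    MovFair col ℓ S := by
  unfold MovFair
  rw [Nat.sub_le_iff_le_add]
  have hp : (c₁, c₂) ∈ (((S.image col) ×ˢ (S.image col)).filter fun p : ℕ × ℕ => p.1 ≠ p.2) := by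
    rw [Finset.mem_filter, Finset.mem_product]
    exact ⟨⟨(mem_image_iff col S c₁).2 h1, (mem_image_iff col S c₂).2 h2⟩, hne⟩
  have hmin := Finset.le_sup (f := fun p : ℕ × ℕ => min ((S.filter fun a => col a = p.1).card)
                      ((S.filter fun a => col a = p.2).card)) hp
  refine Finset.sup_le fun c _ => le_trans (hall c) ?_
  exact Nat.add_le_add le_rfl hmin

lemma nec1 (col : A → ℕ) (ℓ : ℕ) (S : Finset A) (hf : MovFair col ℓ S) (c₀ : ℕ) :
    ∃ d, d ≠ c₀ ∧ cnt' col S c₀ ≤ ℓ + cnt' col S d := by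
  unfold MovFair at hf
  rw [Nat.sub_le_iff_le_add] at hf
  by_cases h0 : cnt' col S c₀ = 0
  · exact ⟨c₀ + 1, by omega, by omega⟩
  have hc₀ : c₀ ∈ S.image col := (mem_image_iff col S c₀).2 (Nat.pos_of_ne_zero h0)
  have hle1 : cnt' col S c₀ ≤ ((S.image col).sup fun c => (S.filter fun a => col a = c).card) :=
    Finset.le_sup hc₀
  by_cases hpe : (((S.image col) ×ˢ (S.image col)).filter fun p : ℕ × ℕ => p.1 ≠ p.2).Nonempty
  · obtain ⟨p, hp, hsup⟩ := Finset.exists_mem_eq_sup _ hpe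
      (fun p : ℕ × ℕ => min ((S.filter fun a => col a = p.1).card)
                      ((S.filter fun a => col a = p.2).card))
    rw [Finset.mem_filter] at hp
    have hne := hp.2
    rw [hsup] at hf
    by_cases h1 : p.1 = c₀
    · refine ⟨p.2, fun h => hne (by rw [h1, h]), ?_⟩
      have : min ((S.filter fun a => col a = p.1).card) ((S.filter fun a => col a = p.2).card)
          ≤ cnt' col S p.2 := min_le_right _ _
      omega
    · refine ⟨p.1, h1, ?_⟩
      have : min ((S.filter fun a => col a = p.1).card) ((S.filter fun a => col a = p.2).card)
          ≤ cnt' col S p.1 := min_le_left _ _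
      omega
  · rw [Finset.not_nonempty_iff_eq_empty] at hpe
    rw [hpe, Finset.sup_empty] at hf
    have hb : (⊥ : ℕ) = 0 := rfl
    rw [hb] at hf
    exact ⟨c₀ + 1, by omega, by omega⟩


lemma sortedSum (cnt : ℕ → ℕ) (hanti : Antitone cnt) :
    ∀ (n : ℕ) (D : Finset ℕ), D.card = n → (∀ c ∈ D, 1 ≤ c) →
    ∑ c ∈ D, cnt c ≤ ∑ i ∈ Finset.range n, cnt (i + 1) := by
  intro n
  induction n with
  | zero =>
    intro D hD _
    rw [Finset.card_eq_zero.1 hD]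
    simp
  | succ n ih =>
    intro D hD hpos
    have hne : D.Nonempty := Finset.card_pos.1 (by omega)
    set m := D.max' hne with hm
    have hmD : m ∈ D := D.max'_mem hne
    have hsub : D ⊆ Finset.Icc 1 m := fun x hx =>
      Finset.mem_Icc.2 ⟨hpos x hx, D.le_max' x hx⟩
    have hcard : n + 1 ≤ m := by
      have h := Finset.card_le_card hsub
      rw [hD, Nat.card_Icc] at h
      omega
    have hsplit : ∑ c ∈ D, cnt c = cnt m + ∑ c ∈ D.erase m, cnt c :=
      (Finset.add_sum_erase _ _ hmD).symm
    rw [hsplit, Finset.sum_range_succ]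
    have h1 : cnt m ≤ cnt (n + 1) := hanti hcard
    have h2 := ih (D.erase m) (by rw [Finset.card_erase_of_mem hmD, hD]; rfl)
      (fun c hc => hpos c (Finset.mem_of_mem_erase hc))
    omega

lemma count_biUnion (col : A → ℕ) {k : ℕ} (P : Fin k → Finset A)
    (hd : ∀ i j, i ≠ j → Disjoint (P i) (P j)) (c : ℕ) :
    cnt' col (Finset.univ.biUnion P) c = ∑ j, cnt' col (P j) c := by
  unfold cnt'
  rw [Finset.filter_biUnion, Finset.card_biUnion]
  intro i _ j _ hij
  exact (hd i j hij).mono (Finset.filter_subset _ _) (Finset.filter_subset _ _)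

lemma sum_cnt_fiber (col : A → ℕ) {k : ℕ} (U : Finset A) (P : Fin k → Finset A)
    (hd : ∀ i j, i ≠ j → Disjoint (P i) (P j)) (hsub : ∀ j, P j ⊆ U) (g : Fin k → ℕ) :
    ∑ j, cnt' col (P j) (g j) ≤ ∑ c ∈ Finset.univ.image g, cnt' col U c := by
  rw [← Finset.sum_fiberwise_of_maps_to
    (fun j _ => Finset.mem_image_of_mem g (Finset.mem_univ j))
    (fun j => cnt' col (P j) (g j))]
  apply Finset.sum_le_sum
  intro c _
  have heq : ∑ j ∈ Finset.univ.filter (fun j => g j = c), cnt' col (P j) (g j)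
      = ∑ j ∈ Finset.univ.filter (fun j => g j = c), cnt' col (P j) c :=
    Finset.sum_congr rfl (fun j hj => by rw [(Finset.mem_filter.1 hj).2])
  rw [heq]
  have hbi : ∑ j ∈ Finset.univ.filter (fun j => g j = c), cnt' col (P j) c
      = ((Finset.univ.filter (fun j => g j = c)).biUnion
          (fun j => (P j).filter (fun a => col a = c))).card := by
    rw [Finset.card_biUnion]
    · rfl
    · intro i _ j _ hij
      exact (hd i j hij).mono (Finset.filter_subset _ _) (Finset.filter_subset _ _)
  rw [hbi]
  apply Finset.card_le_card
  intro a ha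
  obtain ⟨j, _, haj⟩ := Finset.mem_biUnion.1 ha
  rw [Finset.mem_filter] at haj ⊢
  exact ⟨hsub j haj.1, haj.2⟩

lemma stepD (f : ℕ → ℕ) (K : ℕ) (D : Finset ℕ) (m x : ℕ) (hm : m ∉ D) (hK : D.card ≤ K)
    (hK1 : 1 ≤ K) (hxm : x ≠ m) (hle : ∀ c ∈ D, f c ≤ f x) :
    ∃ D₂ : Finset ℕ, x ∈ D₂ ∧ m ∉ D₂ ∧ D₂.card ≤ K ∧ ∑ c ∈ D, f c ≤ ∑ c ∈ D₂, f c := by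
  by_cases hx : x ∈ D
  · exact ⟨D, hx, hm, hK, le_rfl⟩
  by_cases hlt : D.card < K
  · refine ⟨insert x D, Finset.mem_insert_self _ _, ?_, ?_, ?_⟩
    · rw [Finset.mem_insert]
      push_neg
      exact ⟨fun h => hxm h.symm, hm⟩
    · rw [Finset.card_insert_of_notMem hx]; omega
    · rw [Finset.sum_insert hx]; omega
  · have hne : D.Nonempty := Finset.card_pos.1 (by omega)
    obtain ⟨d, hd⟩ := hne
    have hxe : x ∉ D.erase d := fun h => hx (Finset.mem_of_mem_erase h)
    refine ⟨insert x (D.erase d), Finset.mem_insert_self _ _, ?_, ?_, ?_⟩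
    · rw [Finset.mem_insert]
      push_neg
      exact ⟨fun h => hxm h.symm, fun h => hm (Finset.mem_of_mem_erase h)⟩
    · rw [Finset.card_insert_of_notMem hxe, Finset.card_erase_of_mem hd]
      omega
    · rw [Finset.sum_insert hxe, ← Finset.add_sum_erase _ _ hd]
      have := hle d hd
      omega


lemma suffL (col : A → ℕ) (ℓ : ℕ) :
    ∀ (k : ℕ) (S : Finset A) (m : ℕ) (D : Finset ℕ),
      (∀ c, cnt' col S c ≤ cnt' col S m) → m ∉ D → D.card ≤ k →
      cnt' col S m ≤ ℓ * k + ∑ c ∈ D, cnt' col S c →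
      ∃ P : Fin k → Finset A,
        (∀ i j, i ≠ j → Disjoint (P i) (P j)) ∧
        Finset.univ.biUnion P = S ∧ ∀ j, MovFair col ℓ (P j) := by
  intro k
  induction k with
  | zero =>
    intro S m D hmax hm hcard hcond
    have hD : D = ∅ := Finset.card_eq_zero.1 (le_antisymm hcard (Nat.zero_le _))
    subst hD
    simp only [Finset.sum_empty, Nat.mul_zero, Nat.add_zero] at hcond
    have hS : S = ∅ := by
      by_contra h
      obtain ⟨a, ha⟩ := Finset.nonempty_iff_ne_empty.2 h
      have h1 : 0 < cnt' col S (col a) := by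
        rw [← mem_image_iff]
        exact Finset.mem_image_of_mem col ha
      have := hmax (col a)
      omega
    subst hS
    refine ⟨fun _ => ∅, fun i j _ => Finset.disjoint_empty_left _, by simp, fun j => ?_⟩
    exact fairA col ℓ ∅ (fun c => by simp [cnt'])
  | succ k ih =>
    intro S m D hmax hm hcard hcond
    set E := (S.image col).erase m with hE
    set t := E.sup (cnt' col S) with ht
    have hle_t : ∀ c, c ≠ m → cnt' col S c ≤ t := by
      intro c hc
      by_cases h : c ∈ S.image col
      · exact Finset.le_sup (Finset.mem_erase.2 ⟨hc, h⟩)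
      · have h0 : cnt' col S c = 0 := by
          by_contra h'
          exact h ((mem_image_iff col S c).2 (Nat.pos_of_ne_zero h'))
        omega
    obtain ⟨c1, hc1m, hc1t⟩ : ∃ c1, c1 ≠ m ∧ cnt' col S c1 = t := by
      by_cases hne : E.Nonempty
      · obtain ⟨c, hc, hcs⟩ := Finset.exists_mem_eq_sup E hne (cnt' col S)
        exact ⟨c, Finset.ne_of_mem_erase hc, hcs.symm⟩
      · refine ⟨m + 1, by omega, ?_⟩
        rw [Finset.not_nonempty_iff_eq_empty] at hne
        have h1 : cnt' col S (m + 1) = 0 := by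
          by_contra h'
          have : m + 1 ∈ E := Finset.mem_erase.2
            ⟨by omega, (mem_image_iff col S (m + 1)).2 (Nat.pos_of_ne_zero h')⟩
          rw [hne] at this
          exact absurd this (Finset.notMem_empty _)
        rw [h1, ht, hne, Finset.sup_empty]
        rfl
    have htm : t ≤ cnt' col S m := hc1t ▸ hmax c1
    by_cases hcase : cnt' col S m ≤ ℓ + t
    · -- Case A : S itself is fair, rest empty
      have hfairS : MovFair col ℓ S := by
        by_cases ht0 : t = 0
        · refine fairA col ℓ S (fun c => ?_)
          by_cases hcm : c = m
          · subst hcm; omega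
          · have := hle_t c hcm; omega
        · refine fairB col ℓ S m c1 (Ne.symm hc1m) (by omega) (by omega) (fun c => ?_)
          have hmin : min (cnt' col S m) (cnt' col S c1) = t := by
            rw [hc1t]; omega
          rw [hmin]
          by_cases hcm : c = m
          · subst hcm; omega
          · have := hle_t c hcm; omega
      refine ⟨fun j => if j = 0 then S else ∅, ?_, ?_, ?_⟩
      · intro i j hij
        by_cases hi : i = 0
        · have hj : j ≠ 0 := fun h => hij (by rw [hi, h])
          simp [hi, hj]
        · simp [hi]
      · ext a
        simp only [Finset.mem_biUnion, Finset.mem_univ, true_and]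
        constructor
        · rintro ⟨j, hj⟩
          by_cases h : j = 0
          · rwa [if_pos h] at hj
          · rw [if_neg h] at hj; exact absurd hj (Finset.notMem_empty _)
        · intro h; exact ⟨0, by simpa⟩
      · intro j
        by_cases hj : j = 0
        · simpa [hj] using hfairS
        · simp only [if_neg hj]
          exact fairA col ℓ ∅ (fun c => by simp [cnt'])
    · -- Case B
      push_neg at hcase
      have hk1 : 1 ≤ k := by
        by_contra hk
        have hk0 : k = 0 := by omega
        subst hk0
        have hsum : ∑ c ∈ D, cnt' col S c ≤ D.card * t := by
          have := Finset.sum_le_card_nsmul D (cnt' col S) t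
            (fun c hc => hle_t c (fun h => hm (h ▸ hc)))
          simpa using this
        have hcard' : D.card ≤ 1 := hcard
        have : ∑ c ∈ D, cnt' col S c ≤ t := le_trans hsum (by nlinarith)
        omega
      obtain ⟨D₂, hc1D₂, hmD₂, hD₂card, hD₂sum⟩ :=
        stepD (cnt' col S) (k + 1) D m c1 hm hcard (by omega) hc1m
          (fun c hc => hc1t ▸ hle_t c (fun h => hm (h ▸ hc)))
      have hcond₂ : cnt' col S m ≤ ℓ * (k + 1) + ∑ c ∈ D₂, cnt' col S c := by omega
      obtain ⟨r, hr⟩ : ∃ r, cnt' col S m = ℓ + t + r :=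
        ⟨cnt' col S m - (ℓ + t), by omega⟩
      have hrpos : 1 ≤ r := by omega
      obtain ⟨Rm, hRmsub, hRmcard⟩ :=
        Finset.exists_subset_card_eq (s := S.filter fun a => col a = m) (n := r)
          (by show r ≤ cnt' col S m; omega)
      set Cs := E.erase c1 with hCs
      have hkeep : ∀ c : ℕ, ∃ T, T ⊆ S.filter (fun a => col a = c) ∧
          T.card = min (cnt' col S c) r := by
        intro c
        obtain ⟨T, h1, h2⟩ := Finset.exists_subset_card_eq
          (s := S.filter fun a => col a = c) (n := min (cnt' col S c) r)
          (min_le_left _ _)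
        exact ⟨T, h1, h2⟩
      choose keep hkeepsub hkeepcard using hkeep
      set S' := Rm ∪ Cs.biUnion keep with hS'
      have hS'sub : S' ⊆ S := by
        intro a ha
        rcases Finset.mem_union.1 ha with h | h
        · exact Finset.filter_subset _ _ (hRmsub h)
        · obtain ⟨c, _, hac⟩ := Finset.mem_biUnion.1 h
          exact Finset.filter_subset _ _ (hkeepsub c hac)
      have hcol_Rm : ∀ a ∈ Rm, col a = m := fun a ha => (Finset.mem_filter.1 (hRmsub ha)).2
      have hcol_keep : ∀ c, ∀ a ∈ keep c, col a = c :=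
        fun c a ha => (Finset.mem_filter.1 (hkeepsub c ha)).2
      have hCs_ne_m : ∀ c ∈ Cs, c ≠ m := fun c hc =>
        Finset.ne_of_mem_erase (Finset.mem_of_mem_erase hc)
      have hfilt : ∀ x, S'.filter (fun a => col a = x)
          = if x = m then Rm else if x ∈ Cs then keep x else ∅ := by
        intro x
        ext a
        simp only [Finset.mem_filter, hS', Finset.mem_union, Finset.mem_biUnion]
        constructor
        · rintro ⟨h | ⟨c, hc, hac⟩, hx⟩
          · have hxm : x = m := by rw [← hx, hcol_Rm a h]
            rw [if_pos hxm]; exact h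
          · have hcx : c = x := by rw [← hx, hcol_keep c a hac]
            subst hcx
            rw [if_neg (hCs_ne_m c hc), if_pos hc]
            exact hac
        · intro h
          by_cases hxm : x = m
          · rw [if_pos hxm] at h
            exact ⟨Or.inl h, hxm ▸ hcol_Rm a h⟩
          · rw [if_neg hxm] at h
            by_cases hxc : x ∈ Cs
            · rw [if_pos hxc] at h
              exact ⟨Or.inr ⟨x, hxc, h⟩, hcol_keep x a h⟩
            · rw [if_neg hxc] at h
              exact absurd h (Finset.notMem_empty _)
      have hcntS'_m : cnt' col S' m = r := by
        rw [cnt', hfilt m, if_pos rfl, hRmcard]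
      have hcntS'_cs : ∀ x ∈ Cs, cnt' col S' x = min (cnt' col S x) r := by
        intro x hx
        rw [cnt', hfilt x, if_neg (hCs_ne_m x hx), if_pos hx, hkeepcard]
      have hcntS'_0 : ∀ x, x ≠ m → x ∉ Cs → cnt' col S' x = 0 := by
        intro x h1 h2
        rw [cnt', hfilt x, if_neg h1, if_neg h2, Finset.card_empty]
      have hmax' : ∀ c, cnt' col S' c ≤ cnt' col S' m := by
        intro c
        rw [hcntS'_m]
        by_cases h1 : c = m
        · subst h1; rw [hcntS'_m]
        by_cases h2 : c ∈ Cs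
        · rw [hcntS'_cs c h2]; omega
        · rw [hcntS'_0 c h1 h2]; omega
      have hcnt_P0 : ∀ x, cnt' col (S \ S') x = cnt' col S x - cnt' col S' x := by
        intro x
        unfold cnt'
        have hss : (S \ S').filter (fun a => col a = x)
            = S.filter (fun a => col a = x) \ S'.filter (fun a => col a = x) := by
          ext a
          simp only [Finset.mem_filter, Finset.mem_sdiff]
          tauto
        rw [hss]
        exact Finset.card_sdiff_of_subset (Finset.filter_subset_filter _ hS'sub)
      have hcntS'_c1 : cnt' col S' c1 = 0 :=
        hcntS'_0 c1 hc1m (Finset.notMem_erase c1 E)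
      have hP0_m : cnt' col (S \ S') m = ℓ + t := by
        rw [hcnt_P0, hcntS'_m]; omega
      have hP0_c1 : cnt' col (S \ S') c1 = t := by
        rw [hcnt_P0, hcntS'_c1, hc1t]
        exact Nat.sub_zero t
      have hP0_le : ∀ c, c ≠ m → cnt' col (S \ S') c ≤ t := by
        intro c hc
        rw [hcnt_P0]
        have := hle_t c hc
        omega
      have hfairP0 : MovFair col ℓ (S \ S') := by
        by_cases ht0 : t = 0
        · refine fairA col ℓ _ (fun c => ?_)
          by_cases hcm : c = m
          · subst hcm; omega
          · have := hP0_le c hcm; omega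
        · refine fairB col ℓ _ m c1 (Ne.symm hc1m) (by omega) (by omega) (fun c => ?_)
          have hmin : min (cnt' col (S \ S') m) (cnt' col (S \ S') c1) = t := by
            rw [hP0_m, hP0_c1]; omega
          rw [hmin]
          by_cases hcm : c = m
          · subst hcm; omega
          · have := hP0_le c hcm; omega
      have hIH : ∃ Q : Fin k → Finset A,
          (∀ i j, i ≠ j → Disjoint (Q i) (Q j)) ∧
          Finset.univ.biUnion Q = S' ∧ ∀ j, MovFair col ℓ (Q j) := by
        by_cases hEx : ∃ c ∈ D₂.erase c1, r ≤ cnt' col S c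
        · obtain ⟨c, hcD, hrc⟩ := hEx
          have hcm : c ≠ m := fun h => hmD₂ (h ▸ Finset.mem_of_mem_erase hcD)
          have hcCs : c ∈ Cs := by
            refine Finset.mem_erase.2 ⟨Finset.ne_of_mem_erase hcD, Finset.mem_erase.2 ⟨hcm, ?_⟩⟩
            exact (mem_image_iff col S c).2 (by omega)
          refine ih S' m {c} hmax' ?_ (by simpa using hk1) ?_
          · rw [Finset.mem_singleton]
            exact fun h => hcm h.symm
          · rw [Finset.sum_singleton, hcntS'_cs c hcCs, hcntS'_m]
            omega
        · push_neg at hEx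
          set D' := D₂.erase c1 with hD'
          have hsum' : ∑ c ∈ D', cnt' col S' c = ∑ c ∈ D', cnt' col S c := by
            refine Finset.sum_congr rfl (fun c hc => ?_)
            have hcm : c ≠ m := fun h => hmD₂ (h ▸ Finset.mem_of_mem_erase hc)
            by_cases hcCs : c ∈ Cs
            · rw [hcntS'_cs c hcCs]
              have := hEx c hc
              omega
            · rw [hcntS'_0 c hcm hcCs]
              have hc1' : c ≠ c1 := Finset.ne_of_mem_erase hc
              have : cnt' col S c = 0 := by
                by_contra h'
                exact hcCs (Finset.mem_erase.2 ⟨hc1', Finset.mem_erase.2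
                  ⟨hcm, (mem_image_iff col S c).2 (Nat.pos_of_ne_zero h')⟩⟩)
              omega
          have hsplit : ∑ c ∈ D₂, cnt' col S c = cnt' col S c1 + ∑ c ∈ D', cnt' col S c :=
            (Finset.add_sum_erase _ _ hc1D₂).symm
          refine ih S' m D' hmax' (fun h => hmD₂ (Finset.mem_of_mem_erase h)) ?_ ?_
          · rw [hD', Finset.card_erase_of_mem hc1D₂]
            omega
          · rw [hcntS'_m, hsum']
            rw [hsplit, hc1t] at hcond₂
            have hlk : ℓ * (k + 1) = ℓ * k + ℓ := by ring
            omega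
      obtain ⟨Q, hQd, hQu, hQf⟩ := hIH
      have hQsub : ∀ j, Q j ⊆ S' := fun j =>
        hQu ▸ Finset.subset_biUnion_of_mem Q (Finset.mem_univ j)
      refine ⟨Fin.cons (S \ S') Q, ?_, ?_, ?_⟩
      · intro i j hij
        induction i using Fin.cases with
        | zero =>
          induction j using Fin.cases with
          | zero => exact absurd rfl hij
          | succ j =>
            simp only [Fin.cons_zero, Fin.cons_succ]
            exact Finset.disjoint_left.2 (fun a ha haq =>
              (Finset.mem_sdiff.1 ha).2 (hQsub j haq))
        | succ i =>
          induction j using Fin.cases with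
          | zero =>
            simp only [Fin.cons_zero, Fin.cons_succ]
            exact Finset.disjoint_left.2 (fun a ha haq =>
              (Finset.mem_sdiff.1 haq).2 (hQsub i ha))
          | succ j =>
            simp only [Fin.cons_succ]
            exact hQd i j (fun h => hij (by rw [h]))
      · ext a
        simp only [Finset.mem_biUnion, Finset.mem_univ, true_and]
        rw [Fin.exists_fin_succ]
        simp only [Fin.cons_zero, Fin.cons_succ]
        have ha' : (∃ j, a ∈ Q j) ↔ a ∈ S' := by
          rw [← hQu]
          simp [Finset.mem_biUnion]
        rw [ha']
        constructor
        · rintro (h | h)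
          · exact (Finset.mem_sdiff.1 h).1
          · exact hS'sub h
        · intro haS
          by_cases h : a ∈ S'
          · exact Or.inr h
          · exact Or.inl (Finset.mem_sdiff.2 ⟨haS, h⟩)
      · intro j
        induction j using Fin.cases with
        | zero => simpa using hfairP0
        | succ j => simpa using hQf j

end MovAux

/-- On a complete bipartite graph with `k` right vertices, a partition of
`U` into `k` (possibly empty) MoV-`ℓ`-fair parts exists iff
`|U_{c_1}| ≤ ℓk + ∑_{i∈[k]} |U_{c_{i+1}}|`, where colors (indexed by ℕ) are ordered by
decreasing multiplicity. -/
theorem stmt11 {A : Type*} [DecidableEq A]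
    (U : Finset A) (col : A → ℕ)
    (cnt : ℕ → ℕ) (hcnt : ∀ i, cnt i = (U.filter fun a => col a = i).card)
    (hord : ∀ i, cnt (i + 1) ≤ cnt i)
    (k ℓ : ℕ) :
    (∃ P : Fin k → Finset A,
        (∀ i j, i ≠ j → Disjoint (P i) (P j)) ∧
        Finset.univ.biUnion P = U ∧
        ∀ j, MovFair col ℓ (P j))
      ↔ cnt 0 ≤ ℓ * k + ∑ i ∈ Finset.range k, cnt (i + 1) := by
  have hanti : Antitone cnt := antitone_nat_of_succ_le hord
  have hcc : ∀ i, MovAux.cnt' col U i = cnt i := fun i => (hcnt i).symm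
  constructor
  · rintro ⟨P, hd, hU, hf⟩
    have hsubP : ∀ j, P j ⊆ U := fun j =>
      hU ▸ Finset.subset_biUnion_of_mem P (Finset.mem_univ j)
    choose g hg0 hgle using fun j => MovAux.nec1 col ℓ (P j) (hf j) 0
    have h1 : cnt 0 = ∑ j, MovAux.cnt' col (P j) 0 := by
      rw [← hcc, ← hU, MovAux.count_biUnion col P hd]
    have h2 : ∑ j : Fin k, MovAux.cnt' col (P j) 0
        ≤ ∑ j : Fin k, (ℓ + MovAux.cnt' col (P j) (g j)) :=
      Finset.sum_le_sum fun j _ => hgle j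
    have h3 : ∑ j : Fin k, (ℓ + MovAux.cnt' col (P j) (g j))
        = ℓ * k + ∑ j, MovAux.cnt' col (P j) (g j) := by
      rw [Finset.sum_add_distrib, Finset.sum_const, Finset.card_univ, Fintype.card_fin,
        smul_eq_mul]
      ring
    have h4 := MovAux.sum_cnt_fiber col U P hd hsubP g
    have h5 : ∑ c ∈ Finset.univ.image g, MovAux.cnt' col U c
        = ∑ c ∈ Finset.univ.image g, cnt c :=
      Finset.sum_congr rfl fun c _ => hcc c
    have hgpos : ∀ c ∈ Finset.univ.image g, 1 ≤ c := by
      intro c hc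
      obtain ⟨j, _, hj⟩ := Finset.mem_image.1 hc
      have := hg0 j
      omega
    have h6 := MovAux.sortedSum cnt hanti (Finset.univ.image g).card
      (Finset.univ.image g) rfl hgpos
    have h7 : ∑ i ∈ Finset.range (Finset.univ.image g).card, cnt (i + 1)
        ≤ ∑ i ∈ Finset.range k, cnt (i + 1) := by
      apply Finset.sum_le_sum_of_subset
      apply Finset.range_subset_range.2
      exact le_trans Finset.card_image_le (by simp)
    omega
  · intro hcond
    set D : Finset ℕ := (Finset.range k).image (· + 1) with hD
    have h0D : (0 : ℕ) ∉ D := by simp [hD]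
    have hDcard : D.card ≤ k := le_trans Finset.card_image_le (by simp)
    have hDsum : ∑ c ∈ D, MovAux.cnt' col U c = ∑ i ∈ Finset.range k, cnt (i + 1) := by
      rw [hD, Finset.sum_image (by intro x _ y _ h; simp only at h; omega)]
      exact Finset.sum_congr rfl fun i _ => hcc (i + 1)
    have hmax : ∀ c, MovAux.cnt' col U c ≤ MovAux.cnt' col U 0 := by
      intro c
      rw [hcc, hcc]
      exact hanti (Nat.zero_le c)
    have hcond' : MovAux.cnt' col U 0 ≤ ℓ * k + ∑ c ∈ D, MovAux.cnt' col U c := by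
      rw [hcc, hDsum]
      exact hcond
    exact MovAux.suffL col ℓ k U 0 D hmax h0D hDcard hcond'
end

section
/- Max-Min Fair Matching on complete bipartite graphs: Let U be a finite set of vertices colored with colors c_1, …, c_{|C|} ordered so that |U_{c_1}| ≥ … ≥ |U_{c_{|C|}}|, let k ≥ 1 and ℓ ∈ ℕ. There is a partition of U into k labeled (possibly empty) parts each of which is ℓ-fair with respect to Max-Min (i.e., in each part the count of the most frequent color exceeds the count of the least frequent color by at most ℓ) if and only if |U_{c_1}| ≤ ℓ·k + |U_{c_{|C|}}|. -/
open Finset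

lemma stmt13_gmono (k j : ℕ) {n n' : ℕ} (h : n ≤ n') :
    ((range n).filter (fun i => i % k = j)).card ≤ ((range n').filter (fun i => i % k = j)).card :=
  card_le_card (filter_subset_filter _ (range_subset_range.mpr h))

lemma stmt13_gaddk (k j n : ℕ) (hj : j < k) :
    ((range (n + k)).filter (fun i => i % k = j)).card
      = ((range n).filter (fun i => i % k = j)).card + 1 := by
  have h1 : range (n + k) = range k ∪ (range n).image (fun i => k + i) := by
    rw [add_comm n k]
    simp only [range_eq_Ico]
    rw [Finset.image_add_left_Ico, add_zero]
    rw [Finset.Ico_union_Ico_eq_Ico (Nat.zero_le k) (Nat.le_add_right k n)]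
  rw [h1, filter_union]
  have h2 : (range k).filter (fun i => i % k = j) = {j} := by
    ext i
    simp only [mem_filter, mem_range, mem_singleton]
    constructor
    · rintro ⟨hi, h⟩; rw [Nat.mod_eq_of_lt hi] at h; exact h
    · rintro rfl; exact ⟨hj, Nat.mod_eq_of_lt hj⟩
  have h3 : ((range n).image (fun i => k + i)).filter (fun i => i % k = j)
      = ((range n).filter (fun i => i % k = j)).image (fun i => k + i) := by
    ext i
    simp only [mem_filter, mem_image, mem_range]
    constructor
    · rintro ⟨⟨x, hx, rfl⟩, hmod⟩
      exact ⟨x, ⟨hx, by rwa [Nat.add_mod_left] at hmod⟩, rfl⟩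
    · rintro ⟨x, ⟨hx, hmod⟩, rfl⟩
      exact ⟨⟨x, hx, rfl⟩, by rwa [Nat.add_mod_left]⟩
  have hdisj : Disjoint ({j} : Finset ℕ)
      (((range n).filter (fun i => i % k = j)).image (fun i => k + i)) := by
    rw [Finset.disjoint_left]
    intro x hx hx'
    rw [mem_singleton] at hx
    obtain ⟨y, _, hy⟩ := mem_image.mp hx'
    omega
  rw [h2, h3, card_union_of_disjoint hdisj, card_singleton,
    card_image_of_injective _ (add_right_injective k)]
  omega

lemma stmt13_gaddmul (k j n l : ℕ) (hj : j < k) :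
    ((range (n + l * k)).filter (fun i => i % k = j)).card
      = ((range n).filter (fun i => i % k = j)).card + l := by
  induction l with
  | zero => simp
  | succ t ih =>
      have h : n + (t + 1) * k = (n + t * k) + k := by ring
      rw [h, stmt13_gaddk k j _ hj, ih]; omega

/-- On a complete bipartite graph with `k ≥ 1` right vertices, a partition
of `U` into `k` labeled (possibly empty) Max-Min-`ℓ`-fair parts exists iff
`|U_{c_1}| ≤ ℓk + |U_{c_{|C|}}|`, where the colors `Fin m` are ordered by decreasing
multiplicity and the minimum in Max-Min ranges over all colors of `C`. -/
theorem stmt13 {A : Type*} [DecidableEq A] {m : ℕ} (hm : 0 < m)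
    (U : Finset A) (col : A → Fin m)
    (cnt : Fin m → ℕ) (hcnt : ∀ c, cnt c = (U.filter fun a => col a = c).card)
    (hord : ∀ c c' : Fin m, c ≤ c' → cnt c' ≤ cnt c)
    (k ℓ : ℕ) (hk : 0 < k) :
    (∃ P : Fin k → Finset A,
        (∀ i j, i ≠ j → Disjoint (P i) (P j)) ∧
        Finset.univ.biUnion P = U ∧
        ∀ j, (Finset.univ.sup fun c : Fin m => ((P j).filter fun a => col a = c).card)
            - (Finset.univ.inf'
                (Finset.univ_nonempty_iff.mpr (Fin.pos_iff_nonempty.mp hm))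
                fun c : Fin m => ((P j).filter fun a => col a = c).card) ≤ ℓ)
      ↔ cnt ⟨0, hm⟩ ≤ ℓ * k + cnt ⟨m - 1, Nat.sub_lt hm Nat.one_pos⟩ := by
  set c0 : Fin m := ⟨0, hm⟩ with hc0
  set c1 : Fin m := ⟨m - 1, Nat.sub_lt hm Nat.one_pos⟩ with hc1
  constructor
  · rintro ⟨P, hdisj, hunion, hfair⟩
    have hsum : ∀ c : Fin m, cnt c = ∑ j : Fin k, ((P j).filter (fun a => col a = c)).card := by
      intro c
      rw [hcnt, ← hunion, Finset.filter_biUnion, Finset.card_biUnion]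
      intro x _ y _ hxy
      exact (hdisj x y hxy).mono (filter_subset _ _) (filter_subset _ _)
    have key : ∀ j : Fin k, ((P j).filter (fun a => col a = c0)).card
        ≤ ℓ + ((P j).filter (fun a => col a = c1)).card := by
      intro j
      have h1 : ((P j).filter (fun a => col a = c0)).card
          ≤ Finset.univ.sup fun c : Fin m => ((P j).filter fun a => col a = c).card :=
        Finset.le_sup (f := fun c : Fin m => ((P j).filter fun a => col a = c).card) (mem_univ c0)
      have h2 : (Finset.univ.inf'
            (Finset.univ_nonempty_iff.mpr (Fin.pos_iff_nonempty.mp hm))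
            fun c : Fin m => ((P j).filter fun a => col a = c).card)
          ≤ ((P j).filter (fun a => col a = c1)).card :=
        Finset.inf'_le _ (mem_univ c1)
      have h3 := hfair j
      omega
    calc cnt c0 = ∑ j : Fin k, ((P j).filter (fun a => col a = c0)).card := hsum c0
      _ ≤ ∑ j : Fin k, (ℓ + ((P j).filter (fun a => col a = c1)).card) :=
          Finset.sum_le_sum (fun j _ => key j)
      _ = ℓ * k + cnt c1 := by
          rw [Finset.sum_add_distrib, Finset.sum_const, card_univ, Fintype.card_fin,
            smul_eq_mul, hsum c1, mul_comm]
  · intro hle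
    set S : Fin m → Finset A := fun c => U.filter (fun a => col a = c) with hS
    have hScard : ∀ c, (S c).card = cnt c := fun c => (hcnt c).symm
    set f : A → ℕ := fun a =>
      if h : a ∈ S (col a) then ((S (col a)).equivFin ⟨a, h⟩ : ℕ) else 0 with hf
    have hfval : ∀ (c : Fin m) (a : A) (ha : a ∈ S c),
        f a = ((S c).equivFin ⟨a, ha⟩ : ℕ) := by
      intro c a ha
      have hac : col a = c := (mem_filter.mp ha).2
      subst hac
      simp only [hf, dif_pos ha]
    refine ⟨fun j => U.filter (fun a => f a % k = j.val), ?_, ?_, ?_⟩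
    · intro i j hij
      rw [Finset.disjoint_left]
      intro a hai haj
      have h1 := (mem_filter.mp hai).2
      have h2 := (mem_filter.mp haj).2
      exact hij (Fin.ext (h1.symm.trans h2))
    · ext a
      simp only [mem_biUnion, mem_univ, mem_filter, true_and]
      constructor
      · rintro ⟨j, ha, _⟩; exact ha
      · intro ha
        exact ⟨⟨f a % k, Nat.mod_lt _ hk⟩, ha, rfl⟩
    · intro j
      beta_reduce
      -- count formula
      have hcount : ∀ c : Fin m,
          ((U.filter (fun a => f a % k = j.val)).filter (fun a => col a = c)).card
            = ((range (cnt c)).filter (fun i => i % k = j.val)).card := by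
        intro c
        have hset : (U.filter (fun a => f a % k = j.val)).filter (fun a => col a = c)
            = (S c).filter (fun a => f a % k = j.val) := by
          ext a
          simp only [hS, mem_filter]
          tauto
        rw [hset, ← hScard c]
        apply Finset.card_bij (fun a _ => f a)
        · intro a ha
          obtain ⟨haS, hamod⟩ := mem_filter.mp ha
          rw [mem_filter, mem_range]
          refine ⟨?_, hamod⟩
          rw [hfval c a haS]
          exact ((S c).equivFin ⟨a, haS⟩).isLt
        · intro a1 h1 a2 h2 heq
          have ha1 := (mem_filter.mp h1).1
          have ha2 := (mem_filter.mp h2).1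
          rw [hfval c a1 ha1, hfval c a2 ha2] at heq
          have := (S c).equivFin.injective (Fin.ext heq)
          exact congrArg Subtype.val this
        · intro i hi
          obtain ⟨hir, him⟩ := mem_filter.mp hi
          have hilt : i < (S c).card := mem_range.mp hir
          refine ⟨((S c).equivFin.symm ⟨i, hilt⟩ : A), ?_, ?_⟩
          · rw [mem_filter]
            have hbS : (((S c).equivFin.symm ⟨i, hilt⟩ : S c) : A) ∈ S c :=
              ((S c).equivFin.symm ⟨i, hilt⟩).2
            refine ⟨hbS, ?_⟩
            have hfb : f (((S c).equivFin.symm ⟨i, hilt⟩ : S c) : A) = i := by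
              rw [hfval c _ hbS]
              have h5 : (⟨(((S c).equivFin.symm ⟨i, hilt⟩ : S c) : A), hbS⟩ : {x // x ∈ S c})
                  = (S c).equivFin.symm ⟨i, hilt⟩ := Subtype.ext rfl
              rw [h5, Equiv.apply_symm_apply]
            rw [hfb]; exact him
          · have hbS : (((S c).equivFin.symm ⟨i, hilt⟩ : S c) : A) ∈ S c :=
              ((S c).equivFin.symm ⟨i, hilt⟩).2
            rw [hfval c _ hbS]
            have h5 : (⟨(((S c).equivFin.symm ⟨i, hilt⟩ : S c) : A), hbS⟩ : {x // x ∈ S c})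
                = (S c).equivFin.symm ⟨i, hilt⟩ := Subtype.ext rfl
            rw [h5, Equiv.apply_symm_apply]
      -- upper bound via c0, lower via c1
      have hle01 : cnt c0 ≤ cnt c1 + ℓ * k := by omega
      have hg01 : ((range (cnt c0)).filter (fun i => i % k = j.val)).card
          ≤ ((range (cnt c1)).filter (fun i => i % k = j.val)).card + ℓ := by
        calc ((range (cnt c0)).filter (fun i => i % k = j.val)).card
            ≤ ((range (cnt c1 + ℓ * k)).filter (fun i => i % k = j.val)).card :=
              stmt13_gmono k j.val hle01
          _ = ((range (cnt c1)).filter (fun i => i % k = j.val)).card + ℓ :=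
              stmt13_gaddmul k j.val (cnt c1) ℓ j.isLt
      have hinf : ((range (cnt c1)).filter (fun i => i % k = j.val)).card
          ≤ Finset.univ.inf'
              (Finset.univ_nonempty_iff.mpr (Fin.pos_iff_nonempty.mp hm))
              fun c : Fin m =>
                (((U.filter (fun a => f a % k = j.val)).filter fun a => col a = c)).card := by
        apply Finset.le_inf'
        intro c _
        rw [hcount c]
        apply stmt13_gmono
        apply hord c c1
        rw [Fin.le_def]
        have := c.isLt
        simp only [hc1]
        omega
      have hsup : (Finset.univ.sup fun c : Fin m =>
            (((U.filter (fun a => f a % k = j.val)).filter fun a => col a = c)).card)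
          ≤ ((range (cnt c0)).filter (fun i => i % k = j.val)).card := by
        apply Finset.sup_le
        intro c _
        rw [hcount c]
        apply stmt13_gmono
        apply hord c0 c
        rw [Fin.le_def]
        simp [hc0]
      omega
end

section
/- Max-Min Fair Matching on complete bipartite graphs with non-emptiness: With colored vertex set U (|U_{c_1}| ≥ … ≥ |U_{c_{|C|}}|), n = |U|, k parts, and threshold ℓ, there is a partition of U into k nonempty parts each ℓ-fair w.r.t. Max-Min if and only if |U_{c_1}| ≤ ℓ·k + |U_{c_{|C|}}| and, in addition, either ℓ > 0 and n ≥ k, or ℓ = 0 and |U_{c_1}| ≥ k. -/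
lemma rank_lt {A : Type*} [DecidableEq A] (s : Finset A) (ι : A → ℕ) {a : A} (ha : a ∈ s) :
    (s.filter fun b => ι b < ι a).card < s.card := by
  apply Finset.card_lt_card
  constructor
  · exact Finset.filter_subset _ _
  · intro hsub
    have := hsub ha
    simp at this

lemma rank_inj {A : Type*} [DecidableEq A] (s : Finset A) (ι : A → ℕ)
    (hι : ∀ a ∈ s, ∀ b ∈ s, ι a = ι b → a = b) :
    ∀ a ∈ s, ∀ b ∈ s, (s.filter fun x => ι x < ι a).card = (s.filter fun x => ι x < ι b).card → a = b := by
  intro a ha b hb h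
  rcases lt_trichotomy (ι a) (ι b) with hab | hab | hab
  · exfalso
    have hss : (s.filter fun x => ι x < ι a) ⊂ (s.filter fun x => ι x < ι b) := by
      constructor
      · exact Finset.monotone_filter_right s (fun x hx => by omega)
      · intro hsub
        have := hsub (Finset.mem_filter.2 ⟨ha, hab⟩)
        simp at this
    have := Finset.card_lt_card hss
    omega
  · exact hι a ha b hb hab
  · exfalso
    have hss : (s.filter fun x => ι x < ι b) ⊂ (s.filter fun x => ι x < ι a) := by
      constructor
      · exact Finset.monotone_filter_right s (fun x hx => by omega)
      · intro hsub
        have := hsub (Finset.mem_filter.2 ⟨hb, hab⟩)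
        simp at this
    have := Finset.card_lt_card hss
    omega

lemma rank_surj {A : Type*} [DecidableEq A] (s : Finset A) (ι : A → ℕ)
    (hι : ∀ a ∈ s, ∀ b ∈ s, ι a = ι b → a = b) :
    ∀ i < s.card, ∃ a ∈ s, (s.filter fun x => ι x < ι a).card = i := by
  classical
  intro i hi
  set g : {x // x ∈ s} → Fin s.card := fun x => ⟨(s.filter fun b => ι b < ι x.1).card, rank_lt s ι x.2⟩ with hg
  have hginj : Function.Injective g := by
    intro x y hxy
    have := rank_inj s ι hι x.1 x.2 y.1 y.2 (by simpa [hg, Fin.ext_iff] using hxy)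
    exact Subtype.ext this
  have hbij : Function.Bijective g := by
    rw [Fintype.bijective_iff_injective_and_card]
    exact ⟨hginj, by simp [Fintype.card_coe]⟩
  obtain ⟨x, hx⟩ := hbij.2 ⟨i, hi⟩
  exact ⟨x.1, x.2, by simpa [hg, Fin.ext_iff] using hx⟩

lemma rank_count {A : Type*} [DecidableEq A] (s : Finset A) (ι : A → ℕ)
    (hι : ∀ a ∈ s, ∀ b ∈ s, ι a = ι b → a = b)
    (p : ℕ → Prop) [DecidablePred p] :
    (s.filter fun a => p ((s.filter fun b => ι b < ι a).card)).card
      = ((Finset.range s.card).filter p).card := by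
  apply Finset.card_bij (fun a _ => (s.filter fun b => ι b < ι a).card)
  · intro a ha
    rw [Finset.mem_filter] at ha
    exact Finset.mem_filter.2 ⟨Finset.mem_range.2 (rank_lt s ι ha.1), ha.2⟩
  · intro a ha b hb h
    rw [Finset.mem_filter] at ha hb
    exact rank_inj s ι hι a ha.1 b hb.1 h
  · intro i hi
    rw [Finset.mem_filter, Finset.mem_range] at hi
    obtain ⟨a, ha, hra⟩ := rank_surj s ι hι i hi.1
    exact ⟨a, Finset.mem_filter.2 ⟨ha, hra ▸ hi.2⟩, hra⟩

def F (k N j : ℕ) : ℕ := ((Finset.range N).filter fun i => i % k = j).card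

lemma F_succ (k N j : ℕ) :
    F k (N+1) j = F k N j + if N % k = j then 1 else 0 := by
  unfold F
  rw [Finset.range_add_one, Finset.filter_insert]
  split
  · rw [Finset.card_insert_of_notMem (by simp)]
  · simp

lemma F_mono (k j : ℕ) {N N' : ℕ} (h : N ≤ N') : F k N j ≤ F k N' j :=
  Finset.card_le_card (Finset.filter_subset_filter _ (Finset.range_subset_range.2 h))

lemma F_add_k {k j : ℕ} (hj : j < k) (N : ℕ) : F k (N + k) j = F k N j + 1 := by
  induction N with
  | zero =>
    simp only [Nat.zero_add]
    have : (Finset.range k).filter (fun i => i % k = j) = {j} := by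
      ext i
      simp only [Finset.mem_filter, Finset.mem_range, Finset.mem_singleton]
      constructor
      · rintro ⟨h1, h2⟩; rwa [Nat.mod_eq_of_lt h1] at h2
      · rintro rfl; exact ⟨hj, Nat.mod_eq_of_lt hj⟩
    simp [F, this]
  | succ N ih =>
    have : N + 1 + k = (N + k) + 1 := by omega
    rw [this, F_succ, F_succ, ih, Nat.add_mod_right]
    omega

lemma F_add_mul {k j : ℕ} (hj : j < k) (N l : ℕ) : F k (N + l * k) j = F k N j + l := by
  induction l with
  | zero => simp
  | succ l ih =>
    have : N + (l + 1) * k = (N + l * k) + k := by ring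
    rw [this, F_add_k hj, ih]; ring

lemma F_pos {k j N : ℕ} (hj : j < k) (hN : k ≤ N) : 1 ≤ F k N j := by
  rw [Nat.one_le_iff_ne_zero, ← Nat.pos_iff_ne_zero]
  apply Finset.card_pos.2
  exact ⟨j, Finset.mem_filter.2 ⟨Finset.mem_range.2 (by omega), Nat.mod_eq_of_lt hj⟩⟩


/-- With the non-emptiness constraint, a partition of `U` into `k`
nonempty Max-Min-`ℓ`-fair parts exists iff `|U_{c_1}| ≤ ℓk + |U_{c_{|C|}}|` and, in
addition, either `ℓ > 0` and `n ≥ k`, or `ℓ = 0` and `|U_{c_1}| ≥ k`. -/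
theorem stmt14 {A : Type*} [DecidableEq A] {m : ℕ} (hm : 0 < m)
    (U : Finset A) (col : A → Fin m)
    (cnt : Fin m → ℕ) (hcnt : ∀ c, cnt c = (U.filter fun a => col a = c).card)
    (hord : ∀ c c' : Fin m, c ≤ c' → cnt c' ≤ cnt c)
    (k ℓ : ℕ) (hk : 0 < k) :
    (∃ P : Fin k → Finset A,
        (∀ i j, i ≠ j → Disjoint (P i) (P j)) ∧
        Finset.univ.biUnion P = U ∧
        (∀ j, (P j).Nonempty) ∧
        ∀ j, (Finset.univ.sup fun c : Fin m => ((P j).filter fun a => col a = c).card)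
            - (Finset.univ.inf'
                (Finset.univ_nonempty_iff.mpr (Fin.pos_iff_nonempty.mp hm))
                fun c : Fin m => ((P j).filter fun a => col a = c).card) ≤ ℓ)
      ↔ (cnt ⟨0, hm⟩ ≤ ℓ * k + cnt ⟨m - 1, Nat.sub_lt hm Nat.one_pos⟩ ∧
          ((0 < ℓ ∧ k ≤ U.card) ∨ (ℓ = 0 ∧ k ≤ cnt ⟨0, hm⟩))) := by
  classical
  constructor
  · rintro ⟨P, hdisj, hunion, hne, hfair⟩
    classical
    set c0 : Fin m := ⟨0, hm⟩ with hc0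
    set cl : Fin m := ⟨m - 1, Nat.sub_lt hm Nat.one_pos⟩ with hcl
    have hsum : ∀ c : Fin m, cnt c = ∑ j : Fin k, ((P j).filter fun a => col a = c).card := by
      intro c
      rw [hcnt c, ← hunion, Finset.filter_biUnion]
      exact Finset.card_biUnion fun i _ j _ hij =>
        (hdisj i j hij).mono (Finset.filter_subset _ _) (Finset.filter_subset _ _)
    have key : ∀ j : Fin k, ((P j).filter fun a => col a = c0).card
        ≤ ℓ + ((P j).filter fun a => col a = cl).card := by
      intro j
      have h1 := hfair j
      have h2 : ((P j).filter fun a => col a = c0).card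
          ≤ Finset.univ.sup fun c : Fin m => ((P j).filter fun a => col a = c).card :=
        Finset.le_sup (f := fun c : Fin m => ((P j).filter fun a => col a = c).card) (Finset.mem_univ c0)
      have h3 := Finset.inf'_le (s := (Finset.univ : Finset (Fin m)))
        (fun c : Fin m => ((P j).filter fun a => col a = c).card) (Finset.mem_univ cl)
      omega
    constructor
    · calc cnt c0 = ∑ j : Fin k, ((P j).filter fun a => col a = c0).card := hsum c0
      _ ≤ ∑ j : Fin k, (ℓ + ((P j).filter fun a => col a = cl).card) :=
          Finset.sum_le_sum fun j _ => key j
      _ = ℓ * k + cnt cl := by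
          rw [Finset.sum_add_distrib, Finset.sum_const, Finset.card_univ, Fintype.card_fin,
            ← hsum, smul_eq_mul, mul_comm]
    · rcases Nat.eq_zero_or_pos ℓ with hl | hl
      · right
        refine ⟨hl, ?_⟩
        have hone : ∀ j : Fin k, 1 ≤ ((P j).filter fun a => col a = c0).card := by
          intro j
          obtain ⟨a, ha⟩ := hne j
          have h1 : 1 ≤ ((P j).filter fun x => col x = col a).card :=
            Finset.card_pos.2 ⟨a, Finset.mem_filter.2 ⟨ha, rfl⟩⟩
          have h2 : ((P j).filter fun x => col x = col a).card
              ≤ Finset.univ.sup fun c : Fin m => ((P j).filter fun x => col x = c).card :=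
            Finset.le_sup (f := fun c : Fin m => ((P j).filter fun x => col x = c).card) (Finset.mem_univ (col a))
          have h3 := Finset.inf'_le (s := (Finset.univ : Finset (Fin m)))
            (fun c : Fin m => ((P j).filter fun x => col x = c).card) (Finset.mem_univ c0)
          have h4 := hfair j
          omega
        calc k = ∑ _j : Fin k, 1 := by simp
        _ ≤ ∑ j : Fin k, ((P j).filter fun a => col a = c0).card :=
            Finset.sum_le_sum fun j _ => hone j
        _ = cnt c0 := (hsum c0).symm
      · left
        refine ⟨hl, ?_⟩
        have : U.card = ∑ j : Fin k, (P j).card := by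
          rw [← hunion]
          exact Finset.card_biUnion fun i _ j _ hij => hdisj i j hij
        calc k = ∑ _j : Fin k, 1 := by simp
        _ ≤ ∑ j : Fin k, (P j).card :=
            Finset.sum_le_sum fun j _ => Finset.card_pos.2 (hne j)
        _ = U.card := this.symm
  · rintro ⟨h1, h2⟩
    obtain ⟨ι, hιlt, hι⟩ : ∃ ι : A → ℕ, (∀ a ∈ U, ι a < U.card) ∧
        (∀ a ∈ U, ∀ b ∈ U, ι a = ι b → a = b) := by
      refine ⟨fun a => if h : a ∈ U then ((U.equivFin ⟨a, h⟩ : Fin U.card) : ℕ) else 0, ?_, ?_⟩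
      · intro a ha
        beta_reduce
        rw [dif_pos ha]
        exact (U.equivFin ⟨a, ha⟩).isLt
      · intro a ha b hb h
        beta_reduce at h
        rw [dif_pos ha, dif_pos hb] at h
        exact congrArg Subtype.val (U.equivFin.injective (Fin.val_injective h))
    by_cases hbig : k ≤ cnt ⟨0, hm⟩
    ·
      set c0 : Fin m := ⟨0, hm⟩ with hc0
      set cl : Fin m := ⟨m - 1, Nat.sub_lt hm Nat.one_pos⟩ with hcl
      set idx : A → ℕ := fun a => ((U.filter fun b => col b = col a).filter fun b => ι b < ι a).card
        with hidx
      have hcount : ∀ (c : Fin m) (j : Fin k),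
          ((U.filter fun a => idx a % k = j.val).filter fun a => col a = c).card
            = F k (cnt c) j.val := by
        intro c j
        have hseteq : ((U.filter fun a => idx a % k = j.val).filter fun a => col a = c)
            = ((U.filter fun b => col b = c).filter fun a =>
                ((U.filter fun b => col b = c).filter fun b => ι b < ι a).card % k = j.val) := by
          ext a
          simp only [Finset.mem_filter, hidx]
          constructor
          · rintro ⟨⟨haU, hmod⟩, hcol⟩
            rw [hcol] at hmod
            exact ⟨⟨haU, hcol⟩, hmod⟩
          · rintro ⟨⟨haU, hcol⟩, hmod⟩
            rw [hcol]
            exact ⟨⟨haU, hmod⟩, rfl⟩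
        rw [hseteq, hcnt c]
        exact rank_count (U.filter fun b => col b = c) ι
          (fun a ha b hb h => hι a (Finset.mem_filter.1 ha).1 b (Finset.mem_filter.1 hb).1 h)
          (fun i => i % k = j.val)
      refine ⟨fun j => U.filter fun a => idx a % k = j.val, ?_, ?_, ?_, ?_⟩
      · intro i j hij
        rw [Finset.disjoint_left]
        intro a hai haj
        rw [Finset.mem_filter] at hai haj
        exact hij (Fin.ext (hai.2 ▸ haj.2))
      · ext a
        simp only [Finset.mem_biUnion, Finset.mem_filter, Finset.mem_univ, true_and]
        constructor
        · rintro ⟨j, ha, _⟩; exact ha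
        · intro ha; exact ⟨⟨idx a % k, Nat.mod_lt _ hk⟩, ha, rfl⟩
      · intro j
        have hc := hcount c0 j
        have hpos : 1 ≤ F k (cnt c0) j.val := F_pos j.isLt hbig
        rw [← hc] at hpos
        obtain ⟨a, ha⟩ := Finset.card_pos.1 hpos
        exact ⟨a, Finset.filter_subset _ _ ha⟩
      · intro j
        beta_reduce
        have hsup : (Finset.univ.sup fun c : Fin m =>
            (((U.filter fun a => idx a % k = j.val)).filter fun a => col a = c).card)
              ≤ F k (cnt c0) j.val :=
          Finset.sup_le fun c _ => by
            rw [hcount c j]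
            exact F_mono k j.val (hord c0 c (Fin.le_def.mpr (Nat.zero_le _)))
        have hinf : F k (cnt cl) j.val ≤ (Finset.univ.inf'
              (Finset.univ_nonempty_iff.mpr (Fin.pos_iff_nonempty.mp hm))
              fun c : Fin m =>
                (((U.filter fun a => idx a % k = j.val)).filter fun a => col a = c).card) :=
          Finset.le_inf' _ _ fun c _ => by
            rw [hcount c j]
            exact F_mono k j.val (hord c cl (Fin.le_def.mpr (by have := c.isLt; simp [hcl]; omega)))
        have hF : F k (cnt c0) j.val ≤ F k (cnt cl) j.val + ℓ := by
          calc F k (cnt c0) j.val ≤ F k (cnt cl + ℓ * k) j.val := F_mono k j.val (by omega)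
          _ = F k (cnt cl) j.val + ℓ := F_add_mul j.isLt _ _
        omega
    · have hl2 : 0 < ℓ ∧ k ≤ U.card := by
        rcases h2 with h | h
        · exact h
        · exact absurd h.2 hbig
      obtain ⟨hl, hkn⟩ := hl2
      set c0 : Fin m := ⟨0, hm⟩ with hc0
      have hn : 0 < U.card := lt_of_lt_of_le hk hkn
      set key : A → ℕ := fun a => (col a).val * U.card + ι a with hkey
      have hdivkey : ∀ a ∈ U, key a / U.card = (col a).val := by
        intro a ha
        rw [hkey]
        simp only
        rw [Nat.add_comm, Nat.add_mul_div_right _ _ hn, Nat.div_eq_of_lt (hιlt a ha)]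
        omega
      have hkeyinj : ∀ a ∈ U, ∀ b ∈ U, key a = key b → a = b := by
        intro a ha b hb h
        have hca : (col a).val = (col b).val := by
          rw [← hdivkey a ha, ← hdivkey b hb, h]
        apply hι a ha b hb
        rw [hkey] at h
        simp only at h
        rw [hca] at h
        omega
      have hblock : ∀ a ∈ U, ∀ b ∈ U, ∀ x ∈ U, col a = col b →
          key a ≤ key x → key x < key b → col x = col a := by
        intro a ha b hb x hx hcab h1 h2
        apply Fin.ext
        rw [← hdivkey x hx]
        have hxval : (col a).val * U.card ≤ key x ∧ key x < ((col a).val + 1) * U.card := by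
          constructor
          · calc (col a).val * U.card ≤ key a := by rw [hkey]; simp only; omega
            _ ≤ key x := h1
          · calc key x < key b := h2
            _ = (col b).val * U.card + ι b := rfl
            _ < ((col a).val + 1) * U.card := by
                have : (col b).val = (col a).val := by rw [hcab]
                have := hιlt b hb
                nlinarith [this]
        rw [Nat.div_eq_of_lt_le hxval.1 hxval.2]
      set glob : A → ℕ := fun a => (U.filter fun b => key b < key a).card with hglob
      have hmain : ∀ a ∈ U, ∀ b ∈ U, col a = col b → key a < key b → glob b % k ≠ glob a % k := by
        intro a ha b hb hcab hlt heq
        set M : Finset A := U.filter fun x => key a ≤ key x ∧ key x < key b with hM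
        have hsplit : (U.filter fun x => key x < key b)
            = (U.filter fun x => key x < key a) ∪ M := by
          ext x
          simp only [Finset.mem_union, Finset.mem_filter, hM]
          constructor
          · rintro ⟨hx, hxb⟩
            by_cases hxa : key x < key a
            · exact Or.inl ⟨hx, hxa⟩
            · exact Or.inr ⟨hx, by omega, hxb⟩
          · rintro (⟨hx, hxa⟩ | ⟨hx, hxa, hxb⟩)
            · exact ⟨hx, by omega⟩
            · exact ⟨hx, hxb⟩
        have hdisjM : Disjoint (U.filter fun x => key x < key a) M := by
          rw [Finset.disjoint_left]
          intro x hx1 hx2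
          rw [Finset.mem_filter] at hx1
          rw [hM, Finset.mem_filter] at hx2
          omega
        have hcard : glob b = glob a + M.card := by
          rw [hglob]
          simp only
          rw [hsplit, Finset.card_union_of_disjoint hdisjM]
        have hMa : a ∈ M := by
          rw [hM, Finset.mem_filter]
          exact ⟨ha, le_refl _, hlt⟩
        have hMpos : 0 < M.card := Finset.card_pos.2 ⟨a, hMa⟩
        have hMsub : M ⊆ U.filter fun x => col x = col a := by
          intro x hx
          rw [hM, Finset.mem_filter] at hx
          exact Finset.mem_filter.2 ⟨hx.1, hblock a ha b hb x hx.1 hcab hx.2.1 hx.2.2⟩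
        have hMlt : M.card < k := by
          have h2 : (U.filter fun x => col x = col a).card = cnt (col a) := (hcnt (col a)).symm
          have h3 : cnt (col a) ≤ cnt c0 := hord c0 (col a) (Fin.le_def.mpr (Nat.zero_le _))
          have h4 := Finset.card_le_card hMsub
          omega
        have hdvd : k ∣ M.card := by
          have : glob a % k = glob b % k := heq.symm
          have h5 : glob a ≤ glob b := by omega
          have := (Nat.modEq_iff_dvd' h5).1 this
          have h6 : glob b - glob a = M.card := by omega
          rwa [h6] at this
        exact absurd (Nat.le_of_dvd hMpos hdvd) (by omega)
      have htot : ∀ j : Fin k, (U.filter fun a => glob a % k = j.val).card = F k U.card j.val := by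
        intro j
        rw [hglob]
        exact rank_count U key hkeyinj (fun i => i % k = j.val)
      have hle1 : ∀ (c : Fin m) (j : Fin k),
          ((U.filter fun a => glob a % k = j.val).filter fun a => col a = c).card ≤ 1 := by
        intro c j
        rw [Finset.card_le_one]
        intro a ha b hb
        rw [Finset.mem_filter, Finset.mem_filter] at ha hb
        obtain ⟨⟨haU, haj⟩, hac⟩ := ha
        obtain ⟨⟨hbU, hbj⟩, hbc⟩ := hb
        have hcab : col a = col b := by rw [hac, hbc]
        rcases lt_trichotomy (key a) (key b) with h | h | h
        · exact absurd (show glob b % k = glob a % k by rw [haj, hbj])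
            (hmain a haU b hbU hcab h)
        · exact hkeyinj a haU b hbU h
        · exact absurd (show glob a % k = glob b % k by rw [haj, hbj])
            (hmain b hbU a haU hcab.symm h)
      refine ⟨fun j => U.filter fun a => glob a % k = j.val, ?_, ?_, ?_, ?_⟩
      · intro i j hij
        rw [Finset.disjoint_left]
        intro a hai haj
        rw [Finset.mem_filter] at hai haj
        exact hij (Fin.ext (hai.2 ▸ haj.2))
      · ext a
        simp only [Finset.mem_biUnion, Finset.mem_filter, Finset.mem_univ, true_and]
        constructor
        · rintro ⟨j, ha, _⟩; exact ha
        · intro ha; exact ⟨⟨glob a % k, Nat.mod_lt _ hk⟩, ha, rfl⟩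
      · intro j
        have hpos : 1 ≤ F k U.card j.val := F_pos j.isLt hkn
        rw [← htot j] at hpos
        exact Finset.card_pos.1 hpos
      · intro j
        beta_reduce
        have hsup : (Finset.univ.sup fun c : Fin m =>
            ((U.filter fun a => glob a % k = j.val).filter fun a => col a = c).card) ≤ 1 :=
          Finset.sup_le fun c _ => hle1 c j
        omega
end

section
/- Round-robin distribution is Max-Min fair: Let U be a finite colored vertex set with |U_{c_1}| ≥ … ≥ |U_{c_{|C|}}| and suppose |U_{c_1}| ≤ ℓ·k + |U_{c_{|C|}}|. If each color class U_c is distributed among k parts as evenly as possible (each part receives either ⌊|U_c|/k⌋ or ⌈|U_c|/k⌉ vertices of color c, assigned in cyclic order starting from part 1), then every resulting part S satisfies max_c |S_c| − min_c |S_c| ≤ ℓ. -/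
lemma gmono_step (k j n : ℕ) (hk : 0 < k) :
    n / k + (if j < n % k then 1 else 0)
      ≤ (n+1) / k + (if j < (n+1) % k then 1 else 0) := by
  obtain ⟨a, r, hr, hn⟩ : ∃ a r, r < k ∧ n = k * a + r :=
    ⟨n / k, n % k, Nat.mod_lt n hk, (Nat.div_add_mod n k).symm⟩
  subst hn
  have hd : (k * a + r) / k = a := by
    rw [Nat.mul_add_div hk, Nat.div_eq_of_lt hr, Nat.add_zero]
  have hm : (k * a + r) % k = r := by
    rw [Nat.mul_add_mod, Nat.mod_eq_of_lt hr]
  rcases Nat.lt_or_ge (r + 1) k with h | h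
  · have hd' : (k * a + r + 1) / k = a := by
      rw [Nat.add_assoc, Nat.mul_add_div hk, Nat.div_eq_of_lt h, Nat.add_zero]
    have hm' : (k * a + r + 1) % k = r + 1 := by
      rw [Nat.add_assoc, Nat.mul_add_mod, Nat.mod_eq_of_lt h]
    rw [hd, hm, hd', hm']
    split <;> split <;> omega
  · have hk2 : r + 1 = k := by omega
    have he : k * a + r + 1 = k * (a + 1) := by rw [Nat.mul_add]; omega
    have hd' : (k * a + r + 1) / k = a + 1 := by
      rw [he, Nat.mul_div_cancel_left _ hk]
    have hm' : (k * a + r + 1) % k = 0 := by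
      rw [he, Nat.mul_mod_right]
    rw [hd, hm, hd', hm']
    split <;> omega

lemma gmono (k j : ℕ) (hk : 0 < k) {a b : ℕ} (hab : a ≤ b) :
    a / k + (if j < a % k then 1 else 0) ≤ b / k + (if j < b % k then 1 else 0) := by
  induction b, hab using Nat.le_induction with
  | base => exact le_refl _
  | succ n hn ih => exact ih.trans (gmono_step k j n hk)

/-- Round-robin distribution is Max-Min fair: if
`|U_{c_1}| ≤ ℓk + |U_{c_{|C|}}|` (colors ordered by decreasing multiplicity) and each
color class is distributed cyclically (the first `|U_c| mod k` parts get `⌈|U_c|/k⌉`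
vertices of color `c`, the rest get `⌊|U_c|/k⌋`), then every part `S` satisfies
`max_c |S_c| − min_c |S_c| ≤ ℓ`. -/
theorem stmt15 {A : Type*} [DecidableEq A] {m : ℕ} (hm : 0 < m)
    (U : Finset A) (col : A → Fin m)
    (cnt : Fin m → ℕ) (hcnt : ∀ c, cnt c = (U.filter fun a => col a = c).card)
    (hord : ∀ c c' : Fin m, c ≤ c' → cnt c' ≤ cnt c)
    (k ℓ : ℕ) (hk : 0 < k)
    (hcond : cnt ⟨0, hm⟩ ≤ ℓ * k + cnt ⟨m - 1, Nat.sub_lt hm Nat.one_pos⟩)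
    (P : Fin k → Finset A)
    (hP : ∀ (j : Fin k) (c : Fin m),
      ((P j).filter fun a => col a = c).card
        = cnt c / k + if (j : ℕ) < cnt c % k then 1 else 0) :
    ∀ j : Fin k,
      (Finset.univ.sup fun c : Fin m => ((P j).filter fun a => col a = c).card)
        - (Finset.univ.inf'
            (Finset.univ_nonempty_iff.mpr (Fin.pos_iff_nonempty.mp hm))
            fun c : Fin m => ((P j).filter fun a => col a = c).card) ≤ ℓ := by
  intro j
  set c0 : Fin m := ⟨0, hm⟩
  set cl : Fin m := ⟨m - 1, Nat.sub_lt hm Nat.one_pos⟩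
  set f : Fin m → ℕ := fun c => ((P j).filter fun a => col a = c).card with hf
  have hgl : ∀ c, cnt cl / k + (if (j:ℕ) < cnt cl % k then 1 else 0) ≤ f c := by
    intro c
    simp only [hf]
    rw [hP j c]
    refine gmono k j hk (hord c cl ?_)
    rw [Fin.le_def]
    have := c.isLt
    simp only [cl]
    omega
  have hsup : Finset.univ.sup f ≤ ℓ + (cnt cl / k + (if (j:ℕ) < cnt cl % k then 1 else 0)) := by
    apply Finset.sup_le
    intro c _
    simp only [hf]
    rw [hP j c]
    have h1 : cnt c / k + (if (j:ℕ) < cnt c % k then 1 else 0)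
        ≤ (ℓ * k + cnt cl) / k + (if (j:ℕ) < (ℓ * k + cnt cl) % k then 1 else 0) :=
      gmono k j hk ((hord c0 c (by rw [Fin.le_def]; simp [c0])).trans hcond)
    have h2 : (ℓ * k + cnt cl) / k = ℓ + cnt cl / k := by
      rw [Nat.add_comm, Nat.add_mul_div_right _ _ hk, Nat.add_comm]
    have h3 : (ℓ * k + cnt cl) % k = cnt cl % k := by
      simp [Nat.add_mod, Nat.mul_mod_left]
    rw [h2, h3] at h1
    omega
  have hinf : (cnt cl / k + (if (j:ℕ) < cnt cl % k then 1 else 0))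
      ≤ Finset.univ.inf' (Finset.univ_nonempty_iff.mpr (Fin.pos_iff_nonempty.mp hm)) f :=
    Finset.le_inf' _ _ (fun c _ => hgl c)
  omega
end

section
/- Two-sided Hall condition from degree bounds: Let G = (U ⊎ V, E) be a finite bipartite graph admitting a left-perfect many-to-one matching M, and define for each v ∈ V the value z_v = |M(v)|. Then simultaneously Σ_{v∈V} z_v = |U|, and for every W ⊆ V: |ν(W)| ≤ Σ_{v∈W} z_v ≤ |N(W)|. Conversely, any integers z_v ≥ 0 with Σ_{v∈V} z_v = |U| and Σ_{v∈W} z_v ≥ |ν(W)| for all W ⊆ V arise as |M(v)| for some left-perfect many-to-one matching M; moreover in that case Σ_{v∈W} z_v ≤ |N(W)| holds automatically for all W ⊆ V. -/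
/-- (1) For any left-perfect many-to-one matching `m` with `z_v = |M(v)|`:
`∑_v z_v = |U|` and `|ν(W)| ≤ ∑_{v∈W} z_v ≤ |N(W)|` for all `W ⊆ V`.
(2) Conversely, any `z : V → ℕ` with `∑_v z_v = |U|` and `∑_{v∈W} z_v ≥ |ν(W)|` for all
`W` arises as `|M(v)|` of some left-perfect matching; moreover, if every `u` has a
neighbor then `∑_{v∈W} z_v ≤ |N(W)|` holds automatically. -/
theorem stmt19 {U V : Type*} [Fintype U] [Fintype V] [DecidableEq V]
    (E : U → V → Prop) [∀ u v, Decidable (E u v)] :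
    (∀ m : U → V, (∀ u, E u (m u)) →
      (∑ v : V, (Finset.univ.filter fun u : U => m u = v).card = Fintype.card U) ∧
      ∀ W : Finset V,
        (Finset.univ.filter fun u : U => ∀ v, E u v → v ∈ W).card
            ≤ ∑ v ∈ W, (Finset.univ.filter fun u : U => m u = v).card ∧
        ∑ v ∈ W, (Finset.univ.filter fun u : U => m u = v).card
            ≤ (Finset.univ.filter fun u : U => ∃ v ∈ W, E u v).card) ∧
    (∀ z : V → ℕ, (∑ v : V, z v = Fintype.card U) →
      (∀ W : Finset V,
        (Finset.univ.filter fun u : U => ∀ v, E u v → v ∈ W).card ≤ ∑ v ∈ W, z v) →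
      (∃ m : U → V, (∀ u, E u (m u)) ∧
          ∀ v, (Finset.univ.filter fun u : U => m u = v).card = z v) ∧
      ((∀ u : U, ∃ v, E u v) →
        ∀ W : Finset V,
          ∑ v ∈ W, z v ≤ (Finset.univ.filter fun u : U => ∃ v ∈ W, E u v).card)) := by
  classical
  have key : ∀ (m : U → V) (W : Finset V),
      ∑ v ∈ W, (Finset.univ.filter fun u : U => m u = v).card
        = (Finset.univ.filter fun u : U => m u ∈ W).card := by
    intro m W
    rw [Finset.card_eq_sum_card_fiberwise
      (f := m) (s := Finset.univ.filter fun u => m u ∈ W) (t := W)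
      (fun u hu => (Finset.mem_filter.mp hu).2)]
    refine Finset.sum_congr rfl fun v hv => ?_
    congr 1
    ext u
    simp only [Finset.mem_filter, Finset.mem_univ, true_and]
    exact ⟨fun h => ⟨h ▸ hv, h⟩, fun h => h.2⟩
  constructor
  · intro m hm
    refine ⟨?_, fun W => ⟨?_, ?_⟩⟩
    · rw [key m Finset.univ]
      simp [Finset.card_univ]
    · rw [key m W]
      apply Finset.card_le_card
      intro u hu
      simp only [Finset.mem_filter, Finset.mem_univ, true_and] at hu ⊢
      exact hu (m u) (hm u)
    · rw [key m W]
      apply Finset.card_le_card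
      intro u hu
      simp only [Finset.mem_filter, Finset.mem_univ, true_and] at hu ⊢
      exact ⟨m u, hu, hm u⟩
  · intro z hsum hν
    constructor
    · -- existence via Hall
      set t : U → Finset (Σ v : V, Fin (z v)) :=
        fun u => Finset.univ.filter fun p => E u p.1 with ht
      have hall : ∀ s : Finset U, s.card ≤ (s.biUnion t).card := by
        intro s
        have hb : s.biUnion t
            = (Finset.univ.filter fun v => ∃ u ∈ s, E u v).sigma
                fun v => (Finset.univ : Finset (Fin (z v))) := by
          ext p
          simp only [Finset.mem_biUnion, ht, Finset.mem_filter, Finset.mem_univ, true_and,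
            Finset.mem_sigma, and_true]
        rw [hb, Finset.card_sigma]
        simp only [Finset.card_univ, Fintype.card_fin]
        calc s.card
            ≤ (Finset.univ.filter fun u : U =>
                ∀ v, E u v → v ∈ Finset.univ.filter fun v => ∃ u ∈ s, E u v).card := by
              apply Finset.card_le_card
              intro u hu
              simp only [Finset.mem_filter, Finset.mem_univ, true_and]
              exact fun v hv => ⟨u, hu, hv⟩
          _ ≤ ∑ v ∈ Finset.univ.filter fun v => ∃ u ∈ s, E u v, z v := hν _
      obtain ⟨f, hfinj, hf⟩ :=
        (Finset.all_card_le_biUnion_card_iff_exists_injective t).mp hall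
      refine ⟨fun u => (f u).1, fun u => ?_, ?_⟩
      · have := hf u
        simp only [ht, Finset.mem_filter, Finset.mem_univ, true_and] at this
        exact this
      · have hle : ∀ v, (Finset.univ.filter fun u : U => (f u).1 = v).card ≤ z v := by
          intro v
          have h1 : (Finset.univ.filter fun u : U => (f u).1 = v).card
              ≤ (Finset.univ.filter fun p : Σ v : V, Fin (z v) => p.1 = v).card := by
            apply Finset.card_le_card_of_injOn f
            · intro u hu
              simp only [Finset.mem_coe, Finset.mem_filter, Finset.mem_univ, true_and] at hu ⊢
              exact hu
            · exact hfinj.injOn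
          refine h1.trans_eq ?_
          have h2 : (Finset.univ.filter fun p : Σ v : V, Fin (z v) => p.1 = v)
              = ({v} : Finset V).sigma fun v => (Finset.univ : Finset (Fin (z v))) := by
            ext p
            simp [Finset.mem_sigma]
          rw [h2, Finset.card_sigma]
          simp
        have hsum2 : ∑ v : V, (Finset.univ.filter fun u : U => (f u).1 = v).card
            = Fintype.card U := by
          rw [← Finset.card_univ (α := U)]
          exact (Finset.card_eq_sum_card_fiberwise fun u _ => Finset.mem_univ _).symm
        have := (Finset.sum_eq_sum_iff_of_le fun v _ => hle v).mp (hsum2.trans hsum.symm)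
        exact fun v => this v (Finset.mem_univ v)
    · -- automatic upper bound
      intro _ W
      have h1 := hν Wᶜ
      have h2 : (Finset.univ.filter fun u : U => ¬ ∃ v ∈ W, E u v).card
          ≤ (Finset.univ.filter fun u : U => ∀ v, E u v → v ∈ Wᶜ).card := by
        apply Finset.card_le_card
        intro u hu
        simp only [Finset.mem_filter, Finset.mem_univ, true_and, not_exists,
          Finset.mem_compl] at hu ⊢
        tauto
      have h3 : ∑ v ∈ W, z v + ∑ v ∈ Wᶜ, z v = Fintype.card U := by
        rw [Finset.sum_add_sum_compl]
        exact hsum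
      have h4 : (Finset.univ.filter fun u : U => ∃ v ∈ W, E u v).card
          + (Finset.univ.filter fun u : U => ¬ ∃ v ∈ W, E u v).card = Fintype.card U := by
        rw [Finset.card_filter_add_card_filter_not, Finset.card_univ]
      omega
end
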